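/- Let T > 0, f0 > 0, φ > 0, g0 ∈ ℝ and fix t ∈ [0,T) with t < T. Set γ := √(φ/f0); for κ ∈ ℝ with κ − g0/2 − √(φ·f0) ≠ 0 define ζ(κ) := (κ − g0/2 + √(φ·f0))/(κ − g0/2 − √(φ·f0)) and h0^{(κ)}(t) := −g0/2 + √(φ·f0)·(1 + ζ(κ)·exp(2γ(T−t)))/(1 − ζ(κ)·exp(2γ(T−t))). Then the limit as κ → +∞ of h0^{(κ)}(t) exists and equals −g0/2 − f0·γ·coth(γ(T−t)), where coth(x) := (exp(x)+exp(−x))/(exp(x)−exp(−x)). -/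

import Mathlib

open Real Filter Topology

theorem stmt_12 (T f0 φ g0 : ℝ) (hT : 0 < T) (hf0 : 0 < f0) (hφ : 0 < φ)
    (t : ℝ) (ht : t ∈ Set.Ico (0 : ℝ) T)
    (γ : ℝ) (hγ : γ = Real.sqrt (φ / f0))
    (ζ : ℝ → ℝ)
    (hζ : ∀ κ, κ - g0 / 2 - Real.sqrt (φ * f0) ≠ 0 →
        ζ κ = (κ - g0 / 2 + Real.sqrt (φ * f0)) / (κ - g0 / 2 - Real.sqrt (φ * f0)))
    (h0 : ℝ → ℝ)
    (hh0 : ∀ κ, h0 κ = -g0 / 2 + Real.sqrt (φ * f0) *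
        ((1 + ζ κ * Real.exp (2 * γ * (T - t))) /
         (1 - ζ κ * Real.exp (2 * γ * (T - t)))))
    (coth : ℝ → ℝ)
    (hcoth : ∀ x, coth x = (Real.exp x + Real.exp (-x)) / (Real.exp x - Real.exp (-x))) :
    Filter.Tendsto h0 Filter.atTop
      (𝓝 (-g0 / 2 - f0 * γ * coth (γ * (T - t)))) := by
  obtain ⟨ht0, htT⟩ := ht
  have hTt : 0 < T - t := by linarith
  have hγpos : 0 < γ := by
    rw [hγ]; exact Real.sqrt_pos.mpr (div_pos hφ hf0)
  set b := Real.sqrt (φ * f0) with hb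
  have hbpos : 0 < b := Real.sqrt_pos.mpr (mul_pos hφ hf0)
  set x := γ * (T - t) with hx
  have hxpos : 0 < x := mul_pos hγpos hTt
  set E := Real.exp (2 * γ * (T - t)) with hE
  have hE1 : 1 < E := by
    rw [hE, show (1:ℝ) = Real.exp 0 from Real.exp_zero.symm]
    exact Real.exp_lt_exp.mpr (by nlinarith)
  -- b = f0 * γ
  have hsq1 : b ^ 2 = φ * f0 := Real.sq_sqrt (mul_pos hφ hf0).le
  have hsq2 : γ ^ 2 = φ / f0 := by rw [hγ]; exact Real.sq_sqrt (div_pos hφ hf0).le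
  have hsq2' : f0 * γ ^ 2 = φ := by rw [hsq2]; field_simp
  have hbfγ : b = f0 * γ := by
    nlinarith [sq_nonneg (b - f0 * γ), sq_nonneg (b + f0 * γ), mul_pos hf0 hγpos]
  -- ζ tends to 1
  have hzlim : Tendsto ζ atTop (𝓝 1) := by
    have hden : Tendsto (fun κ : ℝ => κ - g0 / 2 - b) atTop atTop := by
      have := tendsto_atTop_add_const_right atTop (-(g0 / 2) - b) tendsto_id
      exact this.congr (fun κ => by simp; ring)
    have h0' : Tendsto (fun κ : ℝ => 1 + 2 * b / (κ - g0 / 2 - b)) atTop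
        (𝓝 (1 + 2 * b * 0)) := by
      exact tendsto_const_nhds.add (((hden.inv_tendsto_atTop).const_mul (2 * b)).congr
        (fun κ => by simp [div_eq_mul_inv]))
    rw [mul_zero, add_zero] at h0'
    apply h0'.congr'
    filter_upwards [eventually_gt_atTop (g0 / 2 + b)] with κ hκ
    have hne : κ - g0 / 2 - b ≠ 0 := by nlinarith
    rw [hζ κ hne, ← div_self hne, ← add_div]
    congr 1
    ring
  -- continuity of the outer function at 1
  have hEne : (1 : ℝ) - 1 * E ≠ 0 := by nlinarith
  have hcont : ContinuousAt (fun z : ℝ => -g0 / 2 + b * ((1 + z * E) / (1 - z * E))) 1 := by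
    apply continuousAt_const.add
    apply continuousAt_const.mul
    exact ContinuousAt.div (by fun_prop) (by fun_prop) hEne
  have hcomp : Tendsto h0 atTop (𝓝 (-g0 / 2 + b * ((1 + 1 * E) / (1 - 1 * E)))) := by
    have := hcont.tendsto.comp hzlim
    apply this.congr
    intro κ
    simp only [Function.comp]
    rw [hh0 κ]
  -- identify the limit value
  have hexne : Real.exp x ≠ 0 := (Real.exp_pos x).ne'
  have hEexp : E = Real.exp x * Real.exp x := by
    rw [hE, ← Real.exp_add]; congr 1; rw [hx]; ring
  have hdne : Real.exp x - Real.exp (-x) ≠ 0 := by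
    have h1 : Real.exp (-x) < 1 := Real.exp_lt_one_iff.mpr (by linarith)
    have h2 : 1 < Real.exp x := by
      rw [show (1:ℝ) = Real.exp 0 from Real.exp_zero.symm]
      exact Real.exp_lt_exp.mpr hxpos
    nlinarith
  have hdne' : Real.exp x - (Real.exp x)⁻¹ ≠ 0 := by rwa [Real.exp_neg] at hdne
  have hEm1 : Real.exp x * Real.exp x - 1 ≠ 0 := by rw [← hEexp]; nlinarith
  have hcothx : coth x = (E + 1) / (E - 1) := by
    rw [hcoth, Real.exp_neg, hEexp]
    rw [div_eq_div_iff hdne' hEm1]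
    field_simp
  have hval : -g0 / 2 + b * ((1 + 1 * E) / (1 - 1 * E)) =
      -g0 / 2 - f0 * γ * coth x := by
    rw [hcothx, ← hbfγ]
    have hE1' : E - 1 ≠ 0 := by nlinarith
    have h1E : 1 - E ≠ 0 := by nlinarith
    field_simp
    ring
  rw [← hx] at *
  rw [← hval]
  exact hcomp
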